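/- Let B be a group, C an abelian group, and φ : C → Aut(B), ψ : B → Aut(C) homomorphisms with φ_{ψ_b(c)} = φ_c for all b ∈ B, c ∈ C. Then A = B × C with operations (b₁,c₁)·(b₂,c₂) = (b₁φ_{c₁}(b₂), c₁c₂) and (b₁,c₁)∘(b₂,c₂) = (b₁b₂, c₁ψ_{b₁}(c₂)) is a skew brace, i.e., the brace relation a₁∘(a₂·a₃) = (a₁∘a₂)·a₁⁻¹·(a₁∘a₃) holds for all a₁,a₂,a₃ ∈ A. -/

import Mathlib

variable {B C : Type*} [Group B] [CommGroup C]

lemma phi_conj_aux (φ : C →* MulAut B) (c₁ c₂ : C) (b : B) :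
    (φ c₁) ((φ c₂) ((φ c₁)⁻¹ b)) = (φ c₂) b := by
  have : φ c₁ * φ c₂ * (φ c₁)⁻¹ = φ c₂ := by
    rw [← map_mul, ← map_inv, ← map_mul, mul_comm c₁ c₂, mul_assoc, mul_inv_cancel, mul_one]
  calc (φ c₁) ((φ c₂) ((φ c₁)⁻¹ b)) = (φ c₁ * φ c₂ * (φ c₁)⁻¹) b := rfl
    _ = (φ c₂) b := by rw [this]

open SemidirectProduct in
/-- Given `φ : C → Aut(B)`, `ψ : B → Aut(C)` with `C` abelian and `φ_{ψ_b(c)} = φ_c`,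
the set `A = B × C` with `(b₁,c₁)·(b₂,c₂) = (b₁φ_{c₁}(b₂), c₁c₂)` (the semidirect
product) and `(b₁,c₁)∘(b₂,c₂) = (b₁b₂, c₁ψ_{b₁}(c₂))` satisfies the brace relation. -/
theorem construction_is_skew_brace (φ : C →* MulAut B) (ψ : B →* MulAut C)
    (hcompat : ∀ (b : B) (c : C), φ (ψ b c) = φ c)
    (circ : (B ⋊[φ] C) → (B ⋊[φ] C) → (B ⋊[φ] C))
    (hcirc : ∀ a₁ a₂ : B ⋊[φ] C,
      circ a₁ a₂ = ⟨a₁.left * a₂.left, a₁.right * ψ a₁.left a₂.right⟩) :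
    ∀ a₁ a₂ a₃ : B ⋊[φ] C,
      circ a₁ (a₂ * a₃) = circ a₁ a₂ * a₁⁻¹ * circ a₁ a₃ := by
  intro a₁ a₂ a₃
  obtain ⟨b₁, c₁⟩ := a₁; obtain ⟨b₂, c₂⟩ := a₂; obtain ⟨b₃, c₃⟩ := a₃
  ext <;> simp [hcirc, mul_left, mul_right, inv_left, inv_right, hcompat, map_mul,
    phi_conj_aux, mul_comm, mul_assoc, mul_left_comm]
  exact (phi_conj_aux φ c₁ c₂ b₃).symm
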